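/- Let A be a unital C*-algebra, let τ be a faithful tracial state on A, and let a be a positive element of A whose spectrum contains a sequence of strictly positive real numbers converging to 0 (i.e., 0 is a non-isolated accumulation point of the spectrum of a from the right). Then for every ε > 0 one has d_τ((a − ε)₊) < d_τ(a), where d_τ(x) denotes the limit as n → ∞ of τ(x^{1/n}) (which exists since the sequence τ(x^{1/n}) is nondecreasing and bounded for positive x). -/

import Mathlib

open Filter Topology
lemma tau_mono {A : Type*} [CStarAlgebra A] [PartialOrder A] [StarOrderedRing A]
    (τ : A →ₗ[ℂ] ℂ) (hτ_pos : ∀ x : A, 0 ≤ x → 0 ≤ (τ x).re ∧ (τ x).im = 0)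
    {p q : A} (h : p ≤ q) : (τ p).re ≤ (τ q).re := by
  have h1 := (hτ_pos (q - p) (sub_nonneg.2 h)).1
  have h2 : τ (q - p) = τ q - τ p := map_sub τ q p
  rw [h2, Complex.sub_re] at h1
  linarith

lemma aux_tendsto {A : Type*} [CStarAlgebra A] [PartialOrder A] [StarOrderedRing A]
    (τ : A →ₗ[ℂ] ℂ) (hτ_unit : τ 1 = 1)
    (hτ_pos : ∀ x : A, 0 ≤ x → 0 ≤ (τ x).re ∧ (τ x).im = 0)
    (x : A) (hx : 0 ≤ x) :
    ∃ L : ℝ, Filter.Tendsto (fun n : ℕ => (τ (cfc (fun s : ℝ => s ^ ((1 : ℝ) / n)) x)).re)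
      Filter.atTop (nhds L) := by
  have hsa : IsSelfAdjoint x := hx.isSelfAdjoint
  have hspec : ∀ s ∈ spectrum ℝ x, (0:ℝ) ≤ s := fun s hs => spectrum_nonneg_of_nonneg hx hs
  have hepos : ∀ n : ℕ, (0:ℝ) < (1:ℝ) / (n+1) := by
    intro n; positivity
  have hcont : ∀ q : ℝ, 0 ≤ q → Continuous (fun s : ℝ => s ^ q) :=
    fun q hq => Real.continuous_rpow_const hq
  have hcontm : ∀ q : ℝ, 0 ≤ q → Continuous (fun s : ℝ => (min s 1) ^ q) :=
    fun q hq => (Real.continuous_rpow_const hq).comp (continuous_id.min continuous_const)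
  set u : ℕ → ℝ := fun n => (τ (cfc (fun s : ℝ => (min s 1) ^ ((1:ℝ) / (n+1))) x)).re with hu
  set v : ℕ → ℝ := fun n =>
    (τ (cfc (fun s : ℝ => s ^ ((1:ℝ) / (n+1)) - (min s 1) ^ ((1:ℝ) / (n+1))) x)).re with hv
  have humono : Monotone u := by
    intro m n hmn
    apply tau_mono τ hτ_pos
    apply cfc_mono (hf := (hcontm _ (hepos m).le).continuousOn)
      (hg := (hcontm _ (hepos n).le).continuousOn)
    intro s hs
    have ht0 : (0:ℝ) ≤ min s 1 := le_min (hspec s hs) zero_le_one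
    have ht1 : min s 1 ≤ 1 := min_le_right _ _
    rcases ht0.eq_or_lt with h0 | h0
    · rw [← h0, Real.zero_rpow (hepos m).ne', Real.zero_rpow (hepos n).ne']
    · apply Real.rpow_le_rpow_of_exponent_ge h0 ht1
      apply one_div_le_one_div_of_le (by positivity)
      have : (m:ℝ) ≤ n := by exact_mod_cast hmn
      linarith
  have hubdd : BddAbove (Set.range u) := by
    refine ⟨1, ?_⟩
    rintro _ ⟨n, rfl⟩
    have : cfc (fun s : ℝ => (min s 1) ^ ((1:ℝ) / (n+1))) x ≤ 1 := by
      calc cfc (fun s : ℝ => (min s 1) ^ ((1:ℝ) / (n+1))) x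
          ≤ cfc (fun _ : ℝ => (1:ℝ)) x := by
            apply cfc_mono (hf := (hcontm _ (hepos n).le).continuousOn)
              (hg := continuousOn_const)
            intro s hs
            exact Real.rpow_le_one (le_min (hspec s hs) zero_le_one) (min_le_right _ _)
              (hepos n).le
        _ = 1 := by rw [cfc_const 1 x hsa, map_one]
    calc u n ≤ (τ 1).re := tau_mono τ hτ_pos this
      _ = 1 := by rw [hτ_unit]; simp
  have hvanti : Antitone v := by
    intro m n hmn
    apply tau_mono τ hτ_pos
    apply cfc_mono
      (hf := ((hcont _ (hepos n).le).sub (hcontm _ (hepos n).le)).continuousOn)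
      (hg := ((hcont _ (hepos m).le).sub (hcontm _ (hepos m).le)).continuousOn)
    intro s hs
    have hs0 := hspec s hs
    simp only [Pi.sub_apply]
    rcases le_or_gt s 1 with h1 | h1
    · rw [min_eq_left h1]; simp
    · rw [min_eq_right h1.le]
      rw [Real.one_rpow, Real.one_rpow]
      have : s ^ ((1:ℝ)/(n+1)) ≤ s ^ ((1:ℝ)/(m+1)) := by
        apply Real.rpow_le_rpow_of_exponent_le h1.le
        apply one_div_le_one_div_of_le (by positivity)
        have : (m:ℝ) ≤ n := by exact_mod_cast hmn
        linarith
      linarith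
  have hvbdd : BddBelow (Set.range v) := by
    refine ⟨0, ?_⟩
    rintro _ ⟨n, rfl⟩
    have : (0:A) ≤ cfc (fun s : ℝ => s ^ ((1:ℝ)/(n+1)) - (min s 1) ^ ((1:ℝ)/(n+1))) x := by
      apply cfc_nonneg
      intro s hs
      have hs0 := hspec s hs
      have : (min s 1) ^ ((1:ℝ)/(n+1)) ≤ s ^ ((1:ℝ)/(n+1)) :=
        Real.rpow_le_rpow (le_min hs0 zero_le_one) (min_le_left _ _) (hepos n).le
      linarith
    exact (hτ_pos _ this).1
  have hsum : ∀ n : ℕ, (τ (cfc (fun s : ℝ => s ^ ((1:ℝ) / ((n:ℝ)+1))) x)).re = u n + v n := by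
    intro n
    have : cfc (fun s : ℝ => s ^ ((1:ℝ) / ((n:ℝ)+1))) x
        = cfc (fun s : ℝ => (min s 1) ^ ((1:ℝ) / (n+1))) x
          + cfc (fun s : ℝ => s ^ ((1:ℝ) / (n+1)) - (min s 1) ^ ((1:ℝ) / (n+1))) x := by
      rw [← cfc_add x (fun s : ℝ => (min s 1) ^ ((1:ℝ) / (n+1)))
        (fun s : ℝ => s ^ ((1:ℝ) / (n+1)) - (min s 1) ^ ((1:ℝ) / (n+1))) ((hcontm _ (hepos n).le).continuousOn)
        (((hcont _ (hepos n).le).sub (hcontm _ (hepos n).le)).continuousOn)]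
      apply cfc_congr
      intro s _
      ring
    rw [this, map_add, Complex.add_re]
  refine ⟨(⨆ n, u n) + (⨅ n, v n), ?_⟩
  have hU := tendsto_atTop_ciSup humono hubdd
  have hV := tendsto_atTop_ciInf hvanti hvbdd
  have hUV : Tendsto (fun n => u n + v n) atTop (nhds ((⨆ n, u n) + (⨅ n, v n))) := hU.add hV
  rw [← Filter.tendsto_add_atTop_iff_nat 1]
  convert hUV using 2 with n
  rw [← hsum n]
  congr 1
  push_cast
  ring_nf

theorem stmt3 {A : Type*} [CStarAlgebra A] [PartialOrder A] [StarOrderedRing A]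
    (τ : A →ₗ[ℂ] ℂ)
    (hτ_unit : τ 1 = 1)
    (hτ_pos : ∀ x : A, 0 ≤ x → 0 ≤ (τ x).re ∧ (τ x).im = 0)
    (hτ_faithful : ∀ x : A, 0 ≤ x → τ x = 0 → x = 0)
    (hτ_trace : ∀ x y : A, τ (x * y) = τ (y * x))
    (a : A) (ha : 0 ≤ a)
    (hsp : ∃ e : ℕ → ℝ, (∀ n, e n ∈ spectrum ℝ a ∧ 0 < e n) ∧
      Filter.Tendsto e Filter.atTop (nhds 0)) :
    ∀ ε : ℝ, 0 < ε →
      ∃ L M : ℝ,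
        Filter.Tendsto
          (fun n : ℕ =>
            (τ (cfc (fun s : ℝ => s ^ ((1 : ℝ) / n))
              (cfc (fun s : ℝ => max (s - ε) 0) a))).re)
          Filter.atTop (nhds L) ∧
        Filter.Tendsto
          (fun n : ℕ => (τ (cfc (fun s : ℝ => s ^ ((1 : ℝ) / n)) a)).re)
          Filter.atTop (nhds M) ∧
        L < M := by
  intro ε hε
  obtain ⟨e, he, hlim⟩ := hsp
  have hsa : IsSelfAdjoint a := ha.isSelfAdjoint
  have hspec : ∀ s ∈ spectrum ℝ a, (0:ℝ) ≤ s := fun s hs => spectrum_nonneg_of_nonneg ha hs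
  -- the cut-down element b
  have hεcont : Continuous (fun s : ℝ => max (s - ε) 0) :=
    (continuous_id.sub continuous_const).max continuous_const
  set b : A := cfc (fun s : ℝ => max (s - ε) 0) a with hb_def
  have hb : 0 ≤ b := cfc_nonneg (fun s _ => le_max_right _ _)
  obtain ⟨L, hL⟩ := aux_tendsto τ hτ_unit hτ_pos b hb
  obtain ⟨M, hM⟩ := aux_tendsto τ hτ_unit hτ_pos a ha
  refine ⟨L, M, hL, hM, ?_⟩
  -- choose δ in the spectrum with 0 < δ < min ε 1
  obtain ⟨n₀, hn₀⟩ := (hlim.eventually (gt_mem_nhds (show (0:ℝ) < min ε 1 by positivity))).exists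
  set δ : ℝ := e n₀ with hδ_def
  have hδspec : δ ∈ spectrum ℝ a := (he n₀).1
  have hδpos : 0 < δ := (he n₀).2
  have hδε : δ < ε := lt_of_lt_of_le hn₀ (min_le_left _ _)
  have hδ1 : δ < 1 := lt_of_lt_of_le hn₀ (min_le_right _ _)
  set d : ℝ := min (δ/2) (ε - δ) with hd_def
  have hd : 0 < d := lt_min (by linarith) (by linarith)
  set g : ℝ → ℝ := fun s => max (1 - d⁻¹ * |s - δ|) 0 with hg_def
  have hgcont : Continuous g :=
    (continuous_const.sub (continuous_const.mul
      ((continuous_id.sub continuous_const).abs))).max continuous_const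
  have hg0 : ∀ s, 0 ≤ g s := fun s => le_max_right _ _
  have hg1 : ∀ s, g s ≤ 1 := by
    intro s
    apply max_le _ zero_le_one
    have : 0 ≤ d⁻¹ * |s - δ| := by positivity
    linarith
  have hgδ : g δ = 1 := by simp [hg_def]
  have hgsupp : ∀ s, 0 < g s → |s - δ| < d := by
    intro s hgs
    have h1 : 0 < 1 - d⁻¹ * |s - δ| := by
      rcases lt_max_iff.mp hgs with h | h
      · exact h
      · exact absurd h (lt_irrefl 0)
    have h2 : d⁻¹ * |s - δ| < 1 := by linarith
    have := mul_lt_mul_of_pos_left h2 hd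
    rwa [mul_one, ← mul_assoc, mul_inv_cancel₀ hd.ne', one_mul] at this
  set c : A := cfc g a with hc_def
  have hc0 : 0 ≤ c := cfc_nonneg (fun s _ => hg0 s)
  have hcne : c ≠ 0 := by
    have hmem : (1:ℝ) ∈ spectrum ℝ c := by
      rw [hc_def, cfc_map_spectrum (f := g) (a := a) hsa hgcont.continuousOn]
      exact ⟨δ, hδspec, hgδ⟩
    intro hc0'
    rw [hc0'] at hmem
    rw [spectrum.mem_iff, sub_zero, map_one] at hmem
    exact hmem isUnit_one
  have hτc : 0 < (τ c).re := by
    rcases (hτ_pos c hc0).1.eq_or_lt with h | h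
    · exfalso
      apply hcne
      apply hτ_faithful c hc0
      exact Complex.ext (by simpa using h.symm) (by simpa using (hτ_pos c hc0).2)
    · exact h
  -- key inequality for n ≥ 1
  have key : ∀ n : ℕ, 1 ≤ n →
      (τ (cfc (fun s : ℝ => s ^ ((1:ℝ)/n)) b)).re + (δ/2) * (τ c).re
        ≤ (τ (cfc (fun s : ℝ => s ^ ((1:ℝ)/n)) a)).re := by
    intro n hn
    have hn0 : (0:ℝ) < n := by exact_mod_cast hn
    have hexp0 : (0:ℝ) < 1/n := by positivity
    have hexp1 : (1:ℝ)/n ≤ 1 := by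
      rw [div_le_one hn0]; exact_mod_cast hn
    have hfc : Continuous (fun s : ℝ => s ^ ((1:ℝ)/n)) := Real.continuous_rpow_const hexp0.le
    have hopineq : cfc (fun s : ℝ => s ^ ((1:ℝ)/n)) b + (δ/2) • c
        ≤ cfc (fun s : ℝ => s ^ ((1:ℝ)/n)) a := by
      rw [hb_def, ← cfc_comp' (fun s : ℝ => s ^ ((1:ℝ)/n)) (fun s : ℝ => max (s - ε) 0) a
        (hfc.continuousOn) (hεcont.continuousOn) hsa]
      rw [hc_def, ← cfc_smul (δ/2) g a hgcont.continuousOn]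
      have hcomp : Continuous (fun x : ℝ => (max (x - ε) 0) ^ ((1:ℝ)/n)) := by
        apply hεcont.rpow_const
        exact fun x => Or.inr hexp0.le
      have hadd := cfc_add a (fun x : ℝ => (max (x - ε) 0) ^ ((1:ℝ)/n))
        (fun x : ℝ => (δ/2) • g x) hcomp.continuousOn
        (show Continuous (fun x : ℝ => (δ/2) • g x) from hgcont.const_smul (δ/2)).continuousOn
      rw [← hadd]
      apply cfc_mono (hf := (hcomp.add (hgcont.const_smul (δ/2))).continuousOn)
        (hg := hfc.continuousOn)
      intro s hs
      have hs0 := hspec s hs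
      change max (s - ε) 0 ^ ((1:ℝ)/n) + δ/2 * g s ≤ s ^ ((1:ℝ)/n)
      by_cases hgs : g s = 0
      · rw [hgs, mul_zero, add_zero]
        exact Real.rpow_le_rpow (le_max_right _ _)
          (max_le (by linarith) hs0) hexp0.le
      · have hgs' : 0 < g s := (hg0 s).lt_of_ne (Ne.symm hgs)
        have habs := hgsupp s hgs'
        rw [abs_lt] at habs
        have hdle1 : d ≤ δ/2 := min_le_left _ _
        have hdle2 : d ≤ ε - δ := min_le_right _ _
        have hsε : s < ε := by linarith
        have hsδ2 : δ/2 < s := by linarith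
        rw [max_eq_right (by linarith : s - ε ≤ 0), Real.zero_rpow hexp0.ne', zero_add]
        have hgle : δ/2 * g s ≤ δ/2 := by
          have := mul_le_mul_of_nonneg_left (hg1 s) (by linarith : (0:ℝ) ≤ δ/2)
          linarith [this]
        rcases le_or_gt s 1 with h1 | h1
        · have : s ^ ((1:ℝ)) ≤ s ^ ((1:ℝ)/n) :=
            Real.rpow_le_rpow_of_exponent_ge (by linarith) h1 hexp1
          rw [Real.rpow_one] at this
          linarith
        · have : (1:ℝ) ≤ s ^ ((1:ℝ)/n) := by
            have := Real.rpow_le_rpow (zero_le_one) h1.le hexp0.le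
            rwa [Real.one_rpow] at this
          linarith
    -- apply the trace
    have := tau_mono τ hτ_pos hopineq
    have hsmul : (τ ((δ/2) • c)).re = (δ/2) * (τ c).re := by
      have : ((δ/2) : ℝ) • c = (((δ/2) : ℝ) : ℂ) • c := by
        rw [← algebraMap_smul ℂ ((δ/2) : ℝ) c, Complex.coe_algebraMap]
      rw [this, map_smul, smul_eq_mul, Complex.mul_re]
      simp
    rw [map_add, Complex.add_re, hsmul] at this
    exact this
  -- pass to the limit
  have hineq : L + (δ/2) * (τ c).re ≤ M := by
    apply le_of_tendsto_of_tendsto (hL.add_const ((δ/2) * (τ c).re)) hM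
    filter_upwards [eventually_ge_atTop 1] with n hn
    exact key n hn
  have : 0 < (δ/2) * (τ c).re := by positivity
  linarith
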